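/- Let lambda1 < lambda2 be positive reals and N >= 1. Define G(N, lambda) = e^{lambda} / (min over feasible z of F_N(z; lambda)), where F_N(z; lambda) = z_1 + sum_{k=2}^{N+1} (z_k - z_{k-1})/(1 + z_1 + ... + z_{k-1}) with z_{N+1} = e^{lambda}, z_0 = 1, 1 <= z_1 <= ... <= z_N <= e^{lambda}. Then G(N, lambda1) <= G(N, lambda2), i.e., the relaying gain is nondecreasing in lambda for fixed N. -/

import Mathlib

/-- The set of values of the net-attenuation objective
`F_N(z) = z₁ + ∑_{k=2}^{N+1} (z_k - z_{k-1})/(z₀ + z₁ + ⋯ + z_{k-1})`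
over feasible tuples `1 = z₀ ≤ z₁ ≤ ⋯ ≤ z_N ≤ z_{N+1} = e^λ`. -/
def attenuationValues (N : ℕ) (lam : ℝ) : Set ℝ :=
  {v | ∃ z : ℕ → ℝ, z 0 = 1 ∧ z (N + 1) = Real.exp lam ∧
    (∀ k ≤ N, z k ≤ z (k + 1)) ∧
    v = z 1 + ∑ k ∈ Finset.Icc 2 (N + 1),
      (z k - z (k - 1)) / ∑ l ∈ Finset.range k, z l}

/-- The relaying gain `G(N, λ)`. -/
noncomputable def relayingGain (N : ℕ) (lam : ℝ) : ℝ :=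
  Real.exp lam / sInf (attenuationValues N lam)

lemma one_le_z {N : ℕ} {z : ℕ → ℝ} (hz0 : z 0 = 1)
    (hmono : ∀ k ≤ N, z k ≤ z (k + 1)) : ∀ l ≤ N + 1, (1 : ℝ) ≤ z l := by
  intro l hl
  induction l with
  | zero => simp [hz0]
  | succ n ih =>
    exact le_trans (ih (by omega)) (hmono n (by omega))

lemma one_le_of_mem {N : ℕ} {lam : ℝ} {v : ℝ}
    (hv : v ∈ attenuationValues N lam) : 1 ≤ v := by
  obtain ⟨z, hz0, hzN, hmono, rfl⟩ := hv
  have hz := one_le_z hz0 hmono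
  have hsum : 0 ≤ ∑ k ∈ Finset.Icc 2 (N + 1),
      (z k - z (k - 1)) / ∑ l ∈ Finset.range k, z l := by
    apply Finset.sum_nonneg
    intro k hk
    simp only [Finset.mem_Icc] at hk
    apply div_nonneg
    · have h := hmono (k - 1) (by omega)
      rw [Nat.sub_add_cancel (by omega)] at h
      linarith
    · apply Finset.sum_nonneg
      intro l hl
      simp only [Finset.mem_range] at hl
      linarith [hz l (by omega)]
  linarith [hz 1 (by omega)]

lemma nonempty_att {N : ℕ} {lam : ℝ} (h : 0 < lam) :
    (attenuationValues N lam).Nonempty := by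
  refine ⟨_, fun k => if k = 0 then 1 else Real.exp lam, by simp, by simp, ?_, rfl⟩
  intro k _
  by_cases hk : k = 0
  · simp [hk, Real.one_le_exp h.le]
  · simp [hk]

lemma bdd_att {N : ℕ} {lam : ℝ} : BddBelow (attenuationValues N lam) :=
  ⟨1, fun _ hv => one_le_of_mem hv⟩

lemma key_compare {N : ℕ} {lam1 lam2 : ℝ} (h1 : 0 < lam1) (h12 : lam1 < lam2)
    {v : ℝ} (hv : v ∈ attenuationValues N lam1) :
    ∃ v' ∈ attenuationValues N lam2, v' ≤ Real.exp (lam2 - lam1) * v := by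
  obtain ⟨z, hz0, hzN, hmono, rfl⟩ := hv
  set c := Real.exp (lam2 - lam1) with hc
  have hc1 : (1 : ℝ) ≤ c := Real.one_le_exp (by linarith)
  have hz := one_le_z hz0 hmono
  set z' : ℕ → ℝ := fun k => if k = 0 then 1 else c * z k with hz'
  have hz'mem : ∀ k, k ≠ 0 → z' k = c * z k := fun k hk => by simp [hz', hk]
  refine ⟨z' 1 + ∑ k ∈ Finset.Icc 2 (N + 1),
      (z' k - z' (k - 1)) / ∑ l ∈ Finset.range k, z' l, ⟨z', by simp [hz'], ?_, ?_, rfl⟩, ?_⟩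
  · have : z' (N + 1) = c * z (N + 1) := hz'mem _ (by omega)
    rw [this, hzN, hc, ← Real.exp_add]
    ring_nf
  · intro k hk
    by_cases h0 : k = 0
    · subst h0
      have e0 : z' 0 = 1 := by simp [hz']
      rw [e0, hz'mem 1 one_ne_zero]
      nlinarith [hz 1 (by omega)]
    · rw [hz'mem k h0, hz'mem (k + 1) (by omega)]
      have := hmono k hk
      nlinarith
  · -- value comparison
    have hsum_le : ∀ k ∈ Finset.Icc 2 (N + 1),
        (z' k - z' (k - 1)) / ∑ l ∈ Finset.range k, z' l ≤
        c * ((z k - z (k - 1)) / ∑ l ∈ Finset.range k, z l) := by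
      intro k hk
      simp only [Finset.mem_Icc] at hk
      have hS : (2 : ℝ) ≤ ∑ l ∈ Finset.range k, z l := by
        have hk2 : (2 : ℝ) ≤ (k : ℝ) := by exact_mod_cast hk.1
        calc (2 : ℝ) ≤ (k : ℝ) := hk2
        _ = ∑ _l ∈ Finset.range k, (1 : ℝ) := by simp
        _ ≤ ∑ l ∈ Finset.range k, z l := by
            apply Finset.sum_le_sum
            intro l hl
            simp only [Finset.mem_range] at hl
            exact hz l (by omega)
      have hSS : ∑ l ∈ Finset.range k, z l ≤ ∑ l ∈ Finset.range k, z' l := by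
        apply Finset.sum_le_sum
        intro l hl
        simp only [Finset.mem_range] at hl
        by_cases h0 : l = 0
        · simp [hz', h0, hz0]
        · rw [hz'mem l h0]
          nlinarith [hz l (by omega)]
      have hnum : 0 ≤ z k - z (k - 1) := by
        have h := hmono (k - 1) (by omega)
        rw [Nat.sub_add_cancel (by omega)] at h
        linarith
      rw [hz'mem k (by omega), hz'mem (k - 1) (by omega)]
      have : c * z k - c * z (k - 1) = c * (z k - z (k - 1)) := by ring
      rw [this, mul_div_assoc]
      apply mul_le_mul_of_nonneg_left _ (by linarith)
      apply div_le_div_of_nonneg_left hnum (by linarith) hSS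
    have h1' : z' 1 = c * z 1 := hz'mem 1 one_ne_zero
    calc z' 1 + ∑ k ∈ Finset.Icc 2 (N + 1),
          (z' k - z' (k - 1)) / ∑ l ∈ Finset.range k, z' l
        ≤ c * z 1 + ∑ k ∈ Finset.Icc 2 (N + 1),
          c * ((z k - z (k - 1)) / ∑ l ∈ Finset.range k, z l) := by
          rw [h1']
          exact add_le_add_right (Finset.sum_le_sum hsum_le) _
      _ = c * (z 1 + ∑ k ∈ Finset.Icc 2 (N + 1),
          (z k - z (k - 1)) / ∑ l ∈ Finset.range k, z l) := by
          rw [mul_add, Finset.mul_sum]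

theorem stmt_9 (N : ℕ) (hN : 1 ≤ N) (lam1 lam2 : ℝ)
    (h1 : 0 < lam1) (h12 : lam1 < lam2) :
    relayingGain N lam1 ≤ relayingGain N lam2 := by
  have h2 : 0 < lam2 := h1.trans h12
  set c := Real.exp (lam2 - lam1) with hc
  have hcpos : 0 < c := Real.exp_pos _
  set m1 := sInf (attenuationValues N lam1) with hm1
  set m2 := sInf (attenuationValues N lam2) with hm2
  have hm1' : 1 ≤ m1 := le_csInf (nonempty_att h1) fun v hv => one_le_of_mem hv
  have hm2' : 1 ≤ m2 := le_csInf (nonempty_att h2) fun v hv => one_le_of_mem hv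
  have hle : m2 ≤ c * m1 := by
    have : m2 / c ≤ m1 := by
      apply le_csInf (nonempty_att h1)
      intro v hv
      obtain ⟨v', hv', hle⟩ := key_compare h1 h12 hv
      have : m2 ≤ c * v := le_trans (csInf_le bdd_att hv') hle
      rw [div_le_iff₀ hcpos]
      linarith [this, mul_comm c v]
    calc m2 = c * (m2 / c) := by field_simp
      _ ≤ c * m1 := by nlinarith
  unfold relayingGain
  rw [← hm1, ← hm2]
  rw [div_le_div_iff₀ (by linarith) (by linarith)]
  have hexp : Real.exp lam2 = c * Real.exp lam1 := by
    rw [hc, ← Real.exp_add]; ring_nf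
  rw [hexp]
  nlinarith [Real.exp_pos lam1]
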